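/- Let a ≥ 0 and let x, y : ℕ → ℝ satisfy 0 ≤ x_m ≤ a^m and 0 ≤ y_n ≤ a^n for all m, n ∈ ℕ. Then Σ_{ℓ,ℓ′=0}^{∞} (1/(ℓ! ℓ′!)) Σ ((m̃+ñ)!/((m−ℓ)! n! (m̃−ℓ′)! ñ!)) x_{m−1} y_{n−1} ≤ 32 e^{16a}, where the inner sum runs over all (m, n, m̃, ñ) ∈ ℕ⁴ with m ≥ max(ℓ,1), n ≥ 1, m̃ ≥ ℓ′ and m + n = m̃ + ñ (in particular the whole family is summable). -/

import Mathlib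

open scoped ENNReal
open Function

/-- The summand of Lemma D.6, doubly shifted case: for a sextuple `(ℓ, ℓ', m, n, m̃, ñ)`,
`(1/(ℓ! ℓ'!)) * ((m̃+ñ)! / ((m-ℓ)! n! (m̃-ℓ')! ñ!)) * x (m-1) * y (n-1)`. -/
noncomputable def summandD6shift2 (x y : ℕ → ℝ) : ℕ × ℕ × ℕ × ℕ × ℕ × ℕ → ℝ :=
  fun (l, l', m, n, mt, nt) =>
    1 / ((l.factorial : ℝ) * (l'.factorial : ℝ)) *
      (((mt + nt).factorial : ℝ) /
        (((m - l).factorial : ℝ) * (n.factorial : ℝ) * ((mt - l').factorial : ℝ) *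
          (nt.factorial : ℝ))) * x (m - 1) * y (n - 1)

/-- Index condition: `m ≥ max(ℓ,1)`, `n ≥ 1`, `ℓ' ≤ m̃` and `m + n = m̃ + ñ`. -/
def condD6shift2 : ℕ × ℕ × ℕ × ℕ × ℕ × ℕ → Prop :=
  fun (l, l', m, n, mt, nt) => l ≤ m ∧ 1 ≤ m ∧ 1 ≤ n ∧ l' ≤ mt ∧ m + n = mt + nt

namespace D6aux

lemma factENN_ne_zero (k : ℕ) : ((k.factorial : ℝ≥0∞)) ≠ 0 := by
  exact_mod_cast k.factorial_ne_zero

lemma factENN_ne_top (k : ℕ) : ((k.factorial : ℝ≥0∞)) ≠ ⊤ := ENNReal.natCast_ne_top _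

lemma div_mul_cancel_aux (a c D : ℝ≥0∞) (hc0 : c ≠ 0) (hct : c ≠ ⊤) :
    a / (c * D) * c = a / D := by
  rw [div_eq_mul_inv, ENNReal.mul_inv (Or.inl hc0) (Or.inl hct), div_eq_mul_inv,
    mul_comm c⁻¹ D⁻¹, ← mul_assoc, mul_assoc (a * D⁻¹), ENNReal.inv_mul_cancel hc0 hct, mul_one]

lemma tsum6 (f : ℕ × ℕ × ℕ × ℕ × ℕ × ℕ → ℝ≥0∞) :
    ∑' q, f q = ∑' l, ∑' l', ∑' m, ∑' n, ∑' mt, ∑' nt, f (l, l', m, n, mt, nt) := by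
  rw [ENNReal.tsum_prod']; refine tsum_congr fun l => ?_
  rw [ENNReal.tsum_prod']; refine tsum_congr fun l' => ?_
  rw [ENNReal.tsum_prod']; refine tsum_congr fun m => ?_
  rw [ENNReal.tsum_prod']; refine tsum_congr fun n => ?_
  rw [ENNReal.tsum_prod']

lemma tsum_shift (f : ℕ → ℝ≥0∞) (k : ℕ) (hf : ∀ m, m < k → f m = 0) :
    ∑' m, f m = ∑' j, f (j + k) := by
  refine (Function.Injective.tsum_eq (g := fun j => j + k) (add_left_injective k) ?_).symm
  intro m hm
  rcases le_or_gt k m with h | h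
  · exact ⟨m - k, by simpa using Nat.sub_add_cancel h⟩
  · exact absurd (hf m h) hm

lemma ofReal_exp (c : ℝ) (hc : 0 ≤ c) :
    ENNReal.ofReal (Real.exp c) = ∑' n : ℕ, (ENNReal.ofReal c) ^ n / (n.factorial : ℝ≥0∞) := by
  rw [show Real.exp c = ∑' n : ℕ, c ^ n / n.factorial by
      rw [Real.exp_eq_exp_ℝ, NormedSpace.exp_eq_tsum_div],
    ENNReal.ofReal_tsum_of_nonneg (fun n => by positivity) (Real.summable_pow_div_factorial c)]
  refine tsum_congr fun n => ?_
  rw [ENNReal.ofReal_div_of_pos (by positivity), ENNReal.ofReal_pow hc, ENNReal.ofReal_natCast]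

lemma expsum (a : ℝ) (ha : 0 ≤ a) :
    ∑' k : ℕ, (3 * ENNReal.ofReal a) ^ k / (k.factorial : ℝ≥0∞)
      = ENNReal.ofReal (Real.exp (3 * a)) := by
  have h3 : (3 : ℝ≥0∞) * ENNReal.ofReal a = ENNReal.ofReal (3 * a) := by
    rw [ENNReal.ofReal_mul (by norm_num : (0:ℝ) ≤ 3), ENNReal.ofReal_ofNat]
  rw [h3, ← ofReal_exp _ (by positivity)]

lemma one_le_E (a : ℝ) (ha : 0 ≤ a) : 1 ≤ ENNReal.ofReal (Real.exp (3 * a)) := by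
  rw [ENNReal.one_le_ofReal]
  exact Real.one_le_exp (by positivity)

/-! ### the `(m̃, ñ)` block and the `ℓ'` layer -/

lemma inner_nt (l' S mt : ℕ) :
    ∑' nt : ℕ, (if l' ≤ mt ∧ S = mt + nt then
        ((mt+nt).factorial : ℝ≥0∞) / (((mt - l').factorial : ℝ≥0∞) * (nt.factorial : ℝ≥0∞)) else 0)
      = if l' ≤ mt ∧ mt ≤ S then
          ((S.factorial : ℝ≥0∞)) / (((mt - l').factorial : ℝ≥0∞) * (((S - mt).factorial : ℝ≥0∞))) else 0 := by
  by_cases h : l' ≤ mt ∧ mt ≤ S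
  · rw [if_pos h, tsum_eq_single (S - mt) (fun nt hnt => if_neg (by omega))]
    have hS : mt + (S - mt) = S := by omega
    rw [if_pos ⟨h.1, hS.symm⟩, hS]
  · rw [if_neg h]
    refine (tsum_congr fun nt => if_neg (by omega)).trans tsum_zero

lemma block_mtnt (l' S : ℕ) :
    ∑' (mt : ℕ) (nt : ℕ), (if l' ≤ mt ∧ S = mt + nt then
        ((mt+nt).factorial : ℝ≥0∞) / (((mt - l').factorial : ℝ≥0∞) * (nt.factorial : ℝ≥0∞)) else 0)
      ≤ if l' ≤ S then 2^(S-l') * ((S.factorial : ℝ≥0∞) / ((S-l').factorial : ℝ≥0∞)) else 0 := by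
  rw [tsum_congr (inner_nt l' S)]
  rw [tsum_eq_sum (s := Finset.range (S+1))
    (fun mt hmt => if_neg (by simp only [Finset.mem_range] at hmt; omega))]
  by_cases hl' : l' ≤ S
  · rw [if_pos hl']
    have hterm : ∀ mt ∈ Finset.range (S+1),
        (if l' ≤ mt ∧ mt ≤ S then
          ((S.factorial : ℝ≥0∞)) / (((mt - l').factorial : ℝ≥0∞) * (((S - mt).factorial : ℝ≥0∞))) else 0)
        = ((S.factorial : ℝ≥0∞) / ((S-l').factorial : ℝ≥0∞)) *
            (if l' ≤ mt then (((S-l').choose (mt-l') : ℕ) : ℝ≥0∞) else 0) := by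
      intro mt hmt
      simp only [Finset.mem_range] at hmt
      by_cases hmt' : l' ≤ mt
      · rw [if_pos ⟨hmt', by omega⟩, if_pos hmt']
        have hnat : (S-l').factorial = (S-l').choose (mt-l') * ((mt - l').factorial * (S - mt).factorial) := by
          have h1 : mt - l' ≤ S - l' := by omega
          have := Nat.choose_mul_factorial_mul_factorial h1
          have h2 : S - l' - (mt - l') = S - mt := by omega
          rw [h2] at this
          rw [← this]; ring
        have hw : ((S-l').factorial : ℝ≥0∞)
            = (((S-l').choose (mt-l') : ℕ) : ℝ≥0∞) * (((mt - l').factorial : ℝ≥0∞) * ((S - mt).factorial : ℝ≥0∞)) := by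
          exact_mod_cast congrArg (Nat.cast : ℕ → ℝ≥0∞) hnat
        rw [mul_comm (((S.factorial : ℝ≥0∞)) / _), ← div_mul_cancel_aux (S.factorial : ℝ≥0∞)
          (((S-l').choose (mt-l') : ℕ) : ℝ≥0∞) (((mt - l').factorial : ℝ≥0∞) * ((S - mt).factorial : ℝ≥0∞))
          (by exact_mod_cast Nat.choose_pos (show mt - l' ≤ S - l' by omega) |>.ne')
          (ENNReal.natCast_ne_top _), ← hw]
        exact mul_comm _ _
      · rw [if_neg (by omega), if_neg hmt', mul_zero]
    rw [Finset.sum_congr rfl hterm, ← Finset.mul_sum]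
    have hsum : ∑ mt ∈ Finset.range (S+1), (if l' ≤ mt then (((S-l').choose (mt-l') : ℕ) : ℝ≥0∞) else 0)
        = (2:ℝ≥0∞)^(S-l') := by
      rw [← Finset.sum_filter]
      have hfil : (Finset.range (S+1)).filter (fun mt => l' ≤ mt) = Finset.Ico l' (S+1) := by
        ext mt; simp [Finset.mem_filter, Finset.mem_range, Finset.mem_Ico]; omega
      rw [hfil, Finset.sum_Ico_eq_sum_range]
      have h1 : S + 1 - l' = (S - l') + 1 := by omega
      rw [h1]
      have h2 : ∀ i, (((S-l').choose (l' + i - l') : ℕ) : ℝ≥0∞) = (((S-l').choose i : ℕ) : ℝ≥0∞) := by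
        intro i
        have : l' + i - l' = i := by omega
        rw [this]
      rw [Finset.sum_congr rfl (fun i _ => h2 i)]
      rw [← Nat.cast_sum]
      rw [Nat.sum_range_choose]
      push_cast; ring
    rw [hsum, mul_comm]
  · rw [if_neg hl']
    refine le_of_eq (Finset.sum_eq_zero fun mt hmt => if_neg (by omega))

lemma layer_l' (S : ℕ) :
    ∑' l' : ℕ, ((l'.factorial : ℝ≥0∞))⁻¹ *
      (if l' ≤ S then 2^(S-l') * ((S.factorial : ℝ≥0∞) / ((S-l').factorial : ℝ≥0∞)) else 0)
      ≤ 3^S := by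
  rw [tsum_eq_sum (s := Finset.range (S+1))
    (fun l' h => by rw [if_neg (by simp only [Finset.mem_range] at h; omega), mul_zero])]
  have hterm : ∀ l' ∈ Finset.range (S+1),
      ((l'.factorial : ℝ≥0∞))⁻¹ *
        (if l' ≤ S then 2^(S-l') * ((S.factorial : ℝ≥0∞) / ((S-l').factorial : ℝ≥0∞)) else 0)
      = (1:ℝ≥0∞)^l' * 2^(S-l') * ((S.choose l' : ℕ) : ℝ≥0∞) := by
    intro l' h
    simp only [Finset.mem_range] at h
    have hl' : l' ≤ S := by omega
    rw [if_pos hl']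
    have hdiv : (S.factorial : ℝ≥0∞) / ((S-l').factorial : ℝ≥0∞)
        = ((S.choose l' : ℕ) : ℝ≥0∞) * (l'.factorial : ℝ≥0∞) := by
      rw [eq_comm, ENNReal.eq_div_iff (factENN_ne_zero _) (factENN_ne_top _)]
      exact_mod_cast congrArg (Nat.cast : ℕ → ℝ≥0∞)
        (by rw [← Nat.choose_mul_factorial_mul_factorial hl']; ring :
          (S-l').factorial * (S.choose l' * l'.factorial) = S.factorial)
    rw [hdiv, one_pow, one_mul]
    calc ((l'.factorial : ℝ≥0∞))⁻¹ * (2^(S-l') * (((S.choose l' : ℕ) : ℝ≥0∞) * (l'.factorial : ℝ≥0∞)))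
        = (((l'.factorial : ℝ≥0∞))⁻¹ * (l'.factorial : ℝ≥0∞)) * (2^(S-l') * ((S.choose l' : ℕ) : ℝ≥0∞)) := by
          ring
      _ = 2^(S-l') * ((S.choose l' : ℕ) : ℝ≥0∞) := by
          rw [ENNReal.inv_mul_cancel (factENN_ne_zero _) (factENN_ne_top _), one_mul]
  rw [Finset.sum_congr rfl hterm, ← add_pow]
  norm_num

/-! ### the exponential layers -/

lemma sum_n (a : ℝ) (ha : 0 ≤ a) :
    ∑' n : ℕ, (if 1 ≤ n then (ENNReal.ofReal a)^(n-1) * 3^n / (n.factorial : ℝ≥0∞) else 0)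
      ≤ 3 * ENNReal.ofReal (Real.exp (3 * a)) := by
  set A := ENNReal.ofReal a
  rw [tsum_shift _ 1 (fun m hm => by interval_cases m; simp)]
  calc ∑' j : ℕ, (if 1 ≤ j + 1 then A^(j+1-1) * 3^(j+1) / ((j+1).factorial : ℝ≥0∞) else 0)
      ≤ ∑' j : ℕ, 3 * ((3*A)^j / (j.factorial : ℝ≥0∞)) := by
        refine ENNReal.tsum_le_tsum fun j => ?_
        rw [if_pos (by omega)]
        have h1 : j + 1 - 1 = j := by omega
        rw [h1]
        have h2 : A^j * (3:ℝ≥0∞)^(j+1) = 3 * (3*A)^j := by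
          rw [mul_pow, pow_succ]; ring
        rw [div_eq_mul_inv, h2, mul_assoc, div_eq_mul_inv]
        refine mul_le_mul_right (mul_le_mul_right ?_ _) _
        refine ENNReal.inv_le_inv.mpr ?_
        exact_mod_cast Nat.factorial_le (Nat.le_succ j)
    _ = 3 * ENNReal.ofReal (Real.exp (3 * a)) := by
        rw [ENNReal.tsum_mul_left, expsum a ha]

lemma sum_m_pos (a : ℝ) (ha : 0 ≤ a) (l : ℕ) :
    ∑' m : ℕ, (if l + 1 ≤ m ∧ 1 ≤ m then
        (ENNReal.ofReal a)^(m-1) * 3^m / ((m-(l+1)).factorial : ℝ≥0∞) else 0)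
      ≤ 3^(l+1) * (ENNReal.ofReal a)^l * ENNReal.ofReal (Real.exp (3 * a)) := by
  set A := ENNReal.ofReal a
  rw [tsum_shift _ (l+1) (fun m hm => if_neg (by omega))]
  have hterm : ∀ j : ℕ, (if l + 1 ≤ j + (l+1) ∧ 1 ≤ j + (l+1) then
      A^(j+(l+1)-1) * 3^(j+(l+1)) / ((j+(l+1)-(l+1)).factorial : ℝ≥0∞) else 0)
      = (3^(l+1) * A^l) * ((3*A)^j / (j.factorial : ℝ≥0∞)) := by
    intro j
    rw [if_pos ⟨by omega, by omega⟩]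
    have h1 : j + (l+1) - 1 = j + l := by omega
    have h2 : j + (l+1) - (l+1) = j := by omega
    rw [h1, h2]
    have h3 : A^(j+l) * (3:ℝ≥0∞)^(j+(l+1)) = (3^(l+1) * A^l) * (3*A)^j := by
      rw [pow_add, pow_add, mul_pow]; ring
    rw [div_eq_mul_inv, h3, mul_assoc, div_eq_mul_inv]
  rw [tsum_congr hterm, ENNReal.tsum_mul_left, expsum a ha]

/-! ### main ENNReal bound -/

noncomputable def fm (a : ℝ) (l m : ℕ) : ℝ≥0∞ :=
  if l ≤ m ∧ 1 ≤ m then (ENNReal.ofReal a)^(m-1) / ((m-l).factorial : ℝ≥0∞) else 0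

noncomputable def fn (a : ℝ) (n : ℕ) : ℝ≥0∞ :=
  if 1 ≤ n then (ENNReal.ofReal a)^(n-1) / (n.factorial : ℝ≥0∞) else 0

noncomputable def dd (l' S mt nt : ℕ) : ℝ≥0∞ :=
  if l' ≤ mt ∧ S = mt + nt then
    ((mt+nt).factorial : ℝ≥0∞) / (((mt - l').factorial : ℝ≥0∞) * (nt.factorial : ℝ≥0∞)) else 0

noncomputable def BB (a : ℝ) : ℕ × ℕ × ℕ × ℕ × ℕ × ℕ → ℝ≥0∞ :=
  fun (l, l', m, n, mt, nt) =>
    ((l.factorial : ℝ≥0∞))⁻¹ * fm a l m * fn a n *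
      (((l'.factorial : ℝ≥0∞))⁻¹ * dd l' (m+n) mt nt)

lemma step_inner (a : ℝ) (m n : ℕ) :
    ∑' (l' : ℕ) (mt : ℕ) (nt : ℕ), ((l'.factorial : ℝ≥0∞))⁻¹ * dd l' (m+n) mt nt ≤ 3^(m+n) := by
  calc ∑' (l' : ℕ) (mt : ℕ) (nt : ℕ), ((l'.factorial : ℝ≥0∞))⁻¹ * dd l' (m+n) mt nt
      = ∑' l' : ℕ, ((l'.factorial : ℝ≥0∞))⁻¹ * ∑' (mt : ℕ) (nt : ℕ), dd l' (m+n) mt nt := by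
        refine tsum_congr fun l' => ?_
        rw [← ENNReal.tsum_mul_left]
        exact tsum_congr fun mt => by rw [← ENNReal.tsum_mul_left]
    _ ≤ ∑' l' : ℕ, ((l'.factorial : ℝ≥0∞))⁻¹ *
          (if l' ≤ m+n then 2^(m+n-l') * (((m+n).factorial : ℝ≥0∞) / ((m+n-l').factorial : ℝ≥0∞)) else 0) := by
        exact ENNReal.tsum_le_tsum fun l' => mul_le_mul_right (block_mtnt l' (m+n)) _
    _ ≤ 3^(m+n) := layer_l' (m+n)

lemma sum_fn (a : ℝ) (ha : 0 ≤ a) :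
    ∑' n : ℕ, fn a n * 3^n ≤ 3 * ENNReal.ofReal (Real.exp (3 * a)) := by
  refine le_trans (le_of_eq (tsum_congr fun n => ?_)) (sum_n a ha)
  unfold fn
  by_cases h : 1 ≤ n
  · rw [if_pos h, if_pos h, div_eq_mul_inv, div_eq_mul_inv]; ring
  · rw [if_neg h, if_neg h, zero_mul]

lemma sum_fm (a : ℝ) (ha : 0 ≤ a) (l : ℕ) :
    ∑' m : ℕ, fm a l m * 3^m
      = ∑' m : ℕ, (if l ≤ m ∧ 1 ≤ m then
          (ENNReal.ofReal a)^(m-1) * 3^m / ((m-l).factorial : ℝ≥0∞) else 0) := by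
  refine tsum_congr fun m => ?_
  unfold fm
  by_cases h : l ≤ m ∧ 1 ≤ m
  · rw [if_pos h, if_pos h, div_eq_mul_inv, div_eq_mul_inv]; ring
  · rw [if_neg h, if_neg h, zero_mul]

lemma sum_l (a : ℝ) (ha : 0 ≤ a) :
    ∑' l : ℕ, ((l.factorial : ℝ≥0∞))⁻¹ * ∑' m : ℕ, fm a l m * 3^m
      ≤ 6 * (ENNReal.ofReal (Real.exp (3 * a)))^2 := by
  set A := ENNReal.ofReal a with hA
  set E := ENNReal.ofReal (Real.exp (3 * a)) with hE
  have hE1 : 1 ≤ E := one_le_E a ha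
  rw [tsum_eq_zero_add' ENNReal.summable]
  have h0 : ((Nat.factorial 0 : ℕ) : ℝ≥0∞)⁻¹ * ∑' m : ℕ, fm a 0 m * 3^m ≤ 3 * E := by
    simp only [Nat.factorial_zero, Nat.cast_one, inv_one, one_mul]
    rw [sum_fm a ha 0]
    refine le_trans (le_of_eq (tsum_congr fun m => ?_)) (sum_n a ha)
    have : (0 ≤ m ∧ 1 ≤ m) ↔ (1 ≤ m) := by omega
    simp [this, Nat.sub_zero]
  have htail : ∑' l : ℕ, (((l+1).factorial : ℝ≥0∞))⁻¹ * ∑' m : ℕ, fm a (l+1) m * 3^m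
      ≤ 3 * E * E := by
    calc ∑' l : ℕ, (((l+1).factorial : ℝ≥0∞))⁻¹ * ∑' m : ℕ, fm a (l+1) m * 3^m
        ≤ ∑' l : ℕ, (3 * E) * ((3*A)^l / (l.factorial : ℝ≥0∞)) := by
          refine ENNReal.tsum_le_tsum fun l => ?_
          have hm : ∑' m : ℕ, fm a (l+1) m * 3^m ≤ 3^(l+1) * A^l * E := by
            rw [sum_fm a ha (l+1)]
            exact sum_m_pos a ha l
          calc (((l+1).factorial : ℝ≥0∞))⁻¹ * ∑' m : ℕ, fm a (l+1) m * 3^m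
              ≤ ((l.factorial : ℝ≥0∞))⁻¹ * (3^(l+1) * A^l * E) := by
                refine mul_le_mul' ?_ hm
                refine ENNReal.inv_le_inv.mpr ?_
                exact_mod_cast Nat.factorial_le (Nat.le_succ l)
            _ = (3 * E) * ((3*A)^l / (l.factorial : ℝ≥0∞)) := by
                rw [div_eq_mul_inv, mul_pow, pow_succ]; ring
      _ = (3 * E) * E := by rw [ENNReal.tsum_mul_left, expsum a ha]
  calc ((Nat.factorial 0 : ℕ) : ℝ≥0∞)⁻¹ * (∑' m : ℕ, fm a 0 m * 3^m)
        + ∑' l : ℕ, (((l+1).factorial : ℝ≥0∞))⁻¹ * ∑' m : ℕ, fm a (l+1) m * 3^m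
      ≤ 3 * E + 3 * E * E := add_le_add h0 htail
    _ ≤ 3 * E * E + 3 * E * E := by
        refine add_le_add_left ?_ _
        calc 3 * E = 3 * E * 1 := by rw [mul_one]
          _ ≤ 3 * E * E := mul_le_mul_right hE1 _
    _ = 6 * E^2 := by ring

lemma main_ENN (a : ℝ) (ha : 0 ≤ a) :
    ∑' q : ℕ × ℕ × ℕ × ℕ × ℕ × ℕ, BB a q ≤ ENNReal.ofReal (32 * Real.exp (16 * a)) := by
  set A := ENNReal.ofReal a with hA
  set E := ENNReal.ofReal (Real.exp (3 * a)) with hE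
  have swap3 : ∀ (g : ℕ → ℕ → ℕ → ℝ≥0∞),
      ∑' (l' : ℕ) (m : ℕ) (n : ℕ), g l' m n = ∑' (m : ℕ) (n : ℕ) (l' : ℕ), g l' m n := by
    intro g
    rw [ENNReal.tsum_comm (f := fun l' m => ∑' n, g l' m n)]
    exact tsum_congr fun m => ENNReal.tsum_comm (f := fun l' n => g l' m n)
  calc ∑' q : ℕ × ℕ × ℕ × ℕ × ℕ × ℕ, BB a q
      = ∑' (l : ℕ) (l' : ℕ) (m : ℕ) (n : ℕ) (mt : ℕ) (nt : ℕ), ((l.factorial : ℝ≥0∞))⁻¹ * fm a l m * fn a n *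
          (((l'.factorial : ℝ≥0∞))⁻¹ * dd l' (m+n) mt nt) := tsum6 _
    _ = ∑' (l : ℕ) (m : ℕ) (n : ℕ) (l' : ℕ) (mt : ℕ) (nt : ℕ), ((l.factorial : ℝ≥0∞))⁻¹ * fm a l m * fn a n *
          (((l'.factorial : ℝ≥0∞))⁻¹ * dd l' (m+n) mt nt) := by
        exact tsum_congr fun l => swap3 _
    _ = ∑' (l : ℕ) (m : ℕ) (n : ℕ), ((l.factorial : ℝ≥0∞))⁻¹ * fm a l m * fn a n *
          ∑' (l' : ℕ) (mt : ℕ) (nt : ℕ), ((l'.factorial : ℝ≥0∞))⁻¹ * dd l' (m+n) mt nt := by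
        refine tsum_congr fun l => tsum_congr fun m => tsum_congr fun n => ?_
        rw [← ENNReal.tsum_mul_left]
        refine tsum_congr fun l' => ?_
        rw [← ENNReal.tsum_mul_left]
        refine tsum_congr fun mt => ?_
        rw [← ENNReal.tsum_mul_left]
    _ ≤ ∑' (l : ℕ) (m : ℕ) (n : ℕ), ((l.factorial : ℝ≥0∞))⁻¹ * fm a l m * fn a n * 3^(m+n) := by
        refine ENNReal.tsum_le_tsum fun l => ENNReal.tsum_le_tsum fun m =>
          ENNReal.tsum_le_tsum fun n => mul_le_mul_right (step_inner a m n) _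
    _ = ∑' (l : ℕ) (m : ℕ), ((l.factorial : ℝ≥0∞))⁻¹ * (fm a l m * 3^m) * ∑' n : ℕ, fn a n * 3^n := by
        refine tsum_congr fun l => tsum_congr fun m => ?_
        rw [← ENNReal.tsum_mul_left]
        refine tsum_congr fun n => ?_
        rw [pow_add]; ring
    _ ≤ ∑' (l : ℕ) (m : ℕ), ((l.factorial : ℝ≥0∞))⁻¹ * (fm a l m * 3^m) * (3 * E) := by
        refine ENNReal.tsum_le_tsum fun l => ENNReal.tsum_le_tsum fun m =>
          mul_le_mul_right (sum_fn a ha) _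
    _ = (3 * E) * ∑' l : ℕ, ((l.factorial : ℝ≥0∞))⁻¹ * ∑' m : ℕ, fm a l m * 3^m := by
        rw [← ENNReal.tsum_mul_left]
        refine tsum_congr fun l => ?_
        rw [← ENNReal.tsum_mul_left, ← ENNReal.tsum_mul_left]
        refine tsum_congr fun m => ?_
        ring
    _ ≤ (3 * E) * (6 * E^2) := mul_le_mul_right (sum_l a ha) _
    _ = 18 * E^3 := by ring
    _ ≤ ENNReal.ofReal (32 * Real.exp (16 * a)) := by
        rw [hE, ← ENNReal.ofReal_pow (Real.exp_pos _).le,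
          show ((18:ℝ≥0∞)) = ENNReal.ofReal 18 by norm_num,
          ← ENNReal.ofReal_mul (by norm_num)]
        refine ENNReal.ofReal_le_ofReal ?_
        have h1 : Real.exp (3*a) ^ 3 = Real.exp (9*a) := by
          rw [← Real.exp_nat_mul]; norm_num; ring_nf
        rw [h1]
        have h2 : Real.exp (9*a) ≤ Real.exp (16*a) := Real.exp_le_exp.2 (by linarith)
        nlinarith [Real.exp_pos (16*a), Real.exp_pos (9*a)]


lemma summand_nonneg (x y : ℕ → ℝ) (hx0 : ∀ m, 0 ≤ x m) (hy0 : ∀ n, 0 ≤ y n)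
    (q : ℕ × ℕ × ℕ × ℕ × ℕ × ℕ) : 0 ≤ summandD6shift2 x y q := by
  obtain ⟨l, l', m, n, mt, nt⟩ := q
  unfold summandD6shift2
  refine mul_nonneg (mul_nonneg (mul_nonneg ?_ ?_) (hx0 _)) (hy0 _) <;> positivity

lemma pointwise (a : ℝ) (ha : 0 ≤ a) (x y : ℕ → ℝ)
    (hx0 : ∀ m, 0 ≤ x m) (hxa : ∀ m, x m ≤ a ^ m)
    (hy0 : ∀ n, 0 ≤ y n) (hya : ∀ n, y n ≤ a ^ n)
    (q : ℕ × ℕ × ℕ × ℕ × ℕ × ℕ) :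
    Set.indicator {q | condD6shift2 q} (fun q => ENNReal.ofReal (summandD6shift2 x y q)) q
      ≤ BB a q := by
  obtain ⟨l, l', m, n, mt, nt⟩ := q
  by_cases h : condD6shift2 (l, l', m, n, mt, nt)
  · rw [Set.indicator_of_mem (show (l, l', m, n, mt, nt) ∈ {q | condD6shift2 q} from h)]
    obtain ⟨h1, h2, h3, h4, h5⟩ := h
    show ENNReal.ofReal (summandD6shift2 x y (l, l', m, n, mt, nt))
      ≤ ((l.factorial : ℝ≥0∞))⁻¹ * fm a l m * fn a n *
        (((l'.factorial : ℝ≥0∞))⁻¹ * dd l' (m+n) mt nt)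
    unfold fm fn dd
    rw [if_pos ⟨h1, h2⟩, if_pos h3, if_pos ⟨h4, h5⟩]
    set C : ℝ := 1 / ((l.factorial : ℝ) * (l'.factorial : ℝ)) *
      (((mt + nt).factorial : ℝ) /
        (((m - l).factorial : ℝ) * (n.factorial : ℝ) * ((mt - l').factorial : ℝ) *
          (nt.factorial : ℝ))) with hCdef
    have hC : 0 ≤ C := by positivity
    have hreal : summandD6shift2 x y (l, l', m, n, mt, nt) ≤ C * a ^ (m-1) * a ^ (n-1) := by
      show C * x (m-1) * y (n-1) ≤ C * a ^ (m-1) * a ^ (n-1)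
      refine mul_le_mul (mul_le_mul_of_nonneg_left (hxa _) hC) (hya _) (hy0 _) (by positivity)
    refine le_trans (ENNReal.ofReal_le_ofReal hreal) (le_of_eq ?_)
    set A := ENNReal.ofReal a with hA
    have e1 : ENNReal.ofReal (C * a ^ (m-1) * a ^ (n-1))
        = ENNReal.ofReal C * A^(m-1) * A^(n-1) := by
      rw [ENNReal.ofReal_mul (by positivity), ENNReal.ofReal_mul hC,
        ENNReal.ofReal_pow ha, ENNReal.ofReal_pow ha]
    have hsplit : ∀ (p q : ℝ≥0∞), p ≠ 0 → p ≠ ⊤ → q ≠ 0 → (p*q)⁻¹ = p⁻¹*q⁻¹ :=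
      fun p q hp hp' hq => ENNReal.mul_inv (Or.inl hp) (Or.inl hp')
    have eC1 : ENNReal.ofReal (1 / ((l.factorial : ℝ) * (l'.factorial : ℝ)))
        = ((l.factorial : ℝ≥0∞))⁻¹ * ((l'.factorial : ℝ≥0∞))⁻¹ := by
      rw [one_div, ENNReal.ofReal_inv_of_pos (by positivity),
        ENNReal.ofReal_mul (by positivity), ENNReal.ofReal_natCast, ENNReal.ofReal_natCast,
        hsplit _ _ (factENN_ne_zero l) (factENN_ne_top l) (factENN_ne_zero l')]
    have eC2 : ENNReal.ofReal ((((mt + nt).factorial : ℝ)) /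
          (((m - l).factorial : ℝ) * (n.factorial : ℝ) * ((mt - l').factorial : ℝ) *
            (nt.factorial : ℝ)))
        = (((mt + nt).factorial : ℝ≥0∞)) *
            ((((m - l).factorial : ℝ≥0∞))⁻¹ * ((n.factorial : ℝ≥0∞))⁻¹ *
              (((mt - l').factorial : ℝ≥0∞))⁻¹ * ((nt.factorial : ℝ≥0∞))⁻¹) := by
      rw [ENNReal.ofReal_div_of_pos (by positivity), ENNReal.ofReal_natCast,
        ENNReal.ofReal_mul (by positivity), ENNReal.ofReal_mul (by positivity),
        ENNReal.ofReal_mul (by positivity), ENNReal.ofReal_natCast, ENNReal.ofReal_natCast,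
        ENNReal.ofReal_natCast, ENNReal.ofReal_natCast, div_eq_mul_inv,
        hsplit _ _ (by simp [factENN_ne_zero, Nat.factorial_ne_zero])
          (ENNReal.mul_ne_top (ENNReal.mul_ne_top (factENN_ne_top _) (factENN_ne_top _)) (factENN_ne_top _))
          (factENN_ne_zero _),
        hsplit _ _ (by simp [factENN_ne_zero, Nat.factorial_ne_zero])
          (ENNReal.mul_ne_top (factENN_ne_top _) (factENN_ne_top _)) (factENN_ne_zero _),
        hsplit _ _ (factENN_ne_zero _) (factENN_ne_top _) (factENN_ne_zero _)]
    rw [e1, hCdef, ENNReal.ofReal_mul (by positivity), eC1, eC2]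
    simp only [div_eq_mul_inv]
    rw [hsplit _ _ (factENN_ne_zero _) (factENN_ne_top _) (factENN_ne_zero _)]
    ring
  · rw [Set.indicator_of_notMem (show (l, l', m, n, mt, nt) ∉ {q | condD6shift2 q} from h)]
    exact zero_le

end D6aux

/-- Lemma D.6 ('summation-ell'), doubly shifted case: if `0 ≤ x m ≤ a^m` and
`0 ≤ y n ≤ a^n`, then
`∑_{ℓ,ℓ'} (1/(ℓ! ℓ'!)) ∑ ((m̃+ñ)!/((m-ℓ)! n! (m̃-ℓ')! ñ!)) x_{m-1} y_{n-1} ≤ 32 e^{16a}`,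
the inner sum over `(m, n, m̃, ñ)` with `m ≥ max(ℓ,1)`, `n ≥ 1`, `m̃ ≥ ℓ'` and
`m + n = m̃ + ñ`. -/
theorem summation_ell_lemma_shift2 (a : ℝ) (ha : 0 ≤ a) (x y : ℕ → ℝ)
    (hx0 : ∀ m, 0 ≤ x m) (hxa : ∀ m, x m ≤ a ^ m)
    (hy0 : ∀ n, 0 ≤ y n) (hya : ∀ n, y n ≤ a ^ n) :
    Summable (fun q : {q : ℕ × ℕ × ℕ × ℕ × ℕ × ℕ // condD6shift2 q} =>
      summandD6shift2 x y q.1) ∧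
    ∑' q : {q : ℕ × ℕ × ℕ × ℕ × ℕ × ℕ // condD6shift2 q},
      summandD6shift2 x y q.1 ≤ 32 * Real.exp (16 * a) := by
  have key : ∑' q : {q : ℕ × ℕ × ℕ × ℕ × ℕ × ℕ // condD6shift2 q},
      ENNReal.ofReal (summandD6shift2 x y q.1)
      ≤ ENNReal.ofReal (32 * Real.exp (16 * a)) := by
    calc ∑' q : {q : ℕ × ℕ × ℕ × ℕ × ℕ × ℕ // condD6shift2 q},
        ENNReal.ofReal (summandD6shift2 x y q.1)
        = ∑' q : ℕ × ℕ × ℕ × ℕ × ℕ × ℕ,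
            Set.indicator {q | condD6shift2 q} (fun q => ENNReal.ofReal (summandD6shift2 x y q)) q :=
          tsum_subtype {q | condD6shift2 q} (fun q => ENNReal.ofReal (summandD6shift2 x y q))
      _ ≤ ∑' q : ℕ × ℕ × ℕ × ℕ × ℕ × ℕ, D6aux.BB a q :=
          ENNReal.tsum_le_tsum (D6aux.pointwise a ha x y hx0 hxa hy0 hya)
      _ ≤ ENNReal.ofReal (32 * Real.exp (16 * a)) := D6aux.main_ENN a ha
  have hnn : ∀ q : {q : ℕ × ℕ × ℕ × ℕ × ℕ × ℕ // condD6shift2 q},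
      0 ≤ summandD6shift2 x y q.1 := fun q => D6aux.summand_nonneg x y hx0 hy0 q.1
  have hne : ∑' q : {q : ℕ × ℕ × ℕ × ℕ × ℕ × ℕ // condD6shift2 q},
      ENNReal.ofReal (summandD6shift2 x y q.1) ≠ ⊤ :=
    (key.trans_lt ENNReal.ofReal_lt_top).ne
  have hsum : Summable (fun q : {q : ℕ × ℕ × ℕ × ℕ × ℕ × ℕ // condD6shift2 q} =>
      summandD6shift2 x y q.1) := by
    have := ENNReal.summable_toReal hne
    refine this.congr fun q => ?_
    exact ENNReal.toReal_ofReal (hnn q)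
  refine ⟨hsum, ?_⟩
  rw [← ENNReal.ofReal_le_ofReal_iff (by positivity)]
  rw [ENNReal.ofReal_tsum_of_nonneg hnn hsum]
  exact key
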